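/- Let x₁ and x₂ be independent standard Gaussian random variables and γ ∈ (−1, 1). Then E[1(x₁ ≥ 0)·1(γx₁ + √(1−γ²)x₂ ≥ 0)·x₁x₂] = (1−γ²)/(2π). -/

import Mathlib

open MeasureTheory ProbabilityTheory Real Set Filter
open scoped ENNReal NNReal

lemma aux_ioi {b : ℝ} (hb : 0 < b) (c : ℝ) :
    ∫ x in Set.Ioi c, x * Real.exp (-b * x ^ 2) = Real.exp (-b * c ^ 2) / (2 * b) := by
  have A : ∀ x : ℝ, HasDerivAt (fun x => -(2*b)⁻¹ * Real.exp (-b * x^2))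
      (x * Real.exp (-b * x^2)) x := by
    intro x
    convert (((hasDerivAt_pow 2 x).const_mul (-b)).exp.const_mul (-(2*b)⁻¹)) using 1
    · rfl
    · rfl
    · field_simp
      ring
  have B : Filter.Tendsto (fun y : ℝ => -(2*b)⁻¹ * Real.exp (-b * y^2)) Filter.atTop
      (nhds (-(2*b)⁻¹ * 0)) := by
    refine Filter.Tendsto.const_mul _ ?_
    exact Real.tendsto_exp_atBot.comp
      ((tendsto_pow_atTop two_ne_zero).const_mul_atTop_of_neg (neg_lt_zero.2 hb))
  have h := integral_Ioi_of_hasDerivAt_of_tendsto' (a := c) (fun x _ => A x)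
    (integrable_mul_exp_neg_mul_sq hb).integrableOn B
  rw [h]
  field_simp
  simp

lemma gauss_int (f : ℝ → ℝ) :
    ∫ x, f x ∂(gaussianReal 0 1) = ∫ x, gaussianPDFReal 0 1 x * f x := by
  rw [gaussianReal_of_var_ne_zero _ one_ne_zero]
  have h1 : gaussianPDF 0 1 = fun x => ((gaussianPDFReal 0 1 x).toNNReal : ℝ≥0∞) := rfl
  rw [h1, integral_withDensity_eq_integral_smul ((measurable_gaussianPDFReal 0 1).real_toNNReal) f]
  congr 1
  ext x
  simp [NNReal.smul_def, Real.coe_toNNReal _ (gaussianPDFReal_nonneg 0 1 x)]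

lemma gauss_integrable (f : ℝ → ℝ) (hm : AEStronglyMeasurable f (gaussianReal 0 1))
    (h : Integrable (fun x => gaussianPDFReal 0 1 x * f x)) :
    Integrable f (gaussianReal 0 1) := by
  rw [gaussianReal_of_var_ne_zero _ one_ne_zero]
  have h1 : gaussianPDF 0 1 = fun x => ((gaussianPDFReal 0 1 x).toNNReal : ℝ≥0∞) := rfl
  rw [h1, integrable_withDensity_iff_integrable_smul ((measurable_gaussianPDFReal 0 1).real_toNNReal)]
  refine h.congr (Filter.Eventually.of_forall fun x => ?_)
  simp [NNReal.smul_def, Real.coe_toNNReal _ (gaussianPDFReal_nonneg 0 1 x)]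

/-- For independent standard Gaussians `x₁, x₂` and `γ ∈ (−1,1)`:
`E[1(x₁ ≥ 0) 1(γx₁ + √(1−γ²)x₂ ≥ 0) x₁ x₂] = (1−γ²)/(2π)`. -/
theorem gaussian_halfspace_cross_moment (γ : ℝ) (hγ : -1 < γ) (hγ' : γ < 1) :
    ∫ x : ℝ × ℝ,
        (if 0 ≤ x.1 ∧ 0 ≤ γ * x.1 + Real.sqrt (1 - γ ^ 2) * x.2 then x.1 * x.2 else 0)
      ∂((gaussianReal 0 1).prod (gaussianReal 0 1)) = (1 - γ ^ 2) / (2 * Real.pi) := by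
  have h1γ : (0:ℝ) < 1 - γ ^ 2 := by nlinarith
  set σ : ℝ := Real.sqrt (1 - γ ^ 2) with hσdef
  have hσ0 : 0 < σ := Real.sqrt_pos.2 h1γ
  have hσ2 : σ ^ 2 = 1 - γ ^ 2 := Real.sq_sqrt h1γ.le
  set G := gaussianReal 0 1 with hG
  set F : ℝ × ℝ → ℝ := fun p => if 0 ≤ p.1 ∧ 0 ≤ γ * p.1 + σ * p.2 then p.1 * p.2 else 0
    with hF
  have g_eq : ∀ x : ℝ, gaussianPDFReal 0 1 x = (Real.sqrt (2 * π))⁻¹ * rexp (-(1/2) * x ^ 2) := by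
    intro x
    simp only [gaussianPDFReal, NNReal.coe_one, mul_one, sub_zero]
    ring_nf
  have hid : Integrable (fun x : ℝ => x) G := by
    refine gauss_integrable _ aestronglyMeasurable_id ?_
    refine ((integrable_mul_exp_neg_mul_sq (by norm_num : (0:ℝ) < 1/2)).const_mul
      (Real.sqrt (2 * π))⁻¹).congr (Filter.Eventually.of_forall fun x => ?_)
    simp only [g_eq]
    ring
  have hprod : Integrable (fun p : ℝ × ℝ => p.1 * p.2) (G.prod G) := hid.mul_prod hid
  have hSm : MeasurableSet {p : ℝ × ℝ | 0 ≤ p.1 ∧ 0 ≤ γ * p.1 + σ * p.2} := by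
    have : {p : ℝ × ℝ | 0 ≤ p.1 ∧ 0 ≤ γ * p.1 + σ * p.2}
        = {p : ℝ × ℝ | 0 ≤ p.1} ∩ {p : ℝ × ℝ | 0 ≤ γ * p.1 + σ * p.2} := rfl
    rw [this]
    exact (measurableSet_le measurable_const measurable_fst).inter
      (measurableSet_le measurable_const
        ((measurable_fst.const_mul γ).add (measurable_snd.const_mul σ)))
  have hFind : F = Set.indicator {p : ℝ × ℝ | 0 ≤ p.1 ∧ 0 ≤ γ * p.1 + σ * p.2}
      (fun p => p.1 * p.2) := by
    ext p
    by_cases h : 0 ≤ p.1 ∧ 0 ≤ γ * p.1 + σ * p.2 <;> simp [hF, Set.indicator, h]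
  have hFm : AEStronglyMeasurable F (G.prod G) := by
    rw [hFind]
    exact ((measurable_fst.mul measurable_snd).indicator hSm).aestronglyMeasurable
  have hFint : Integrable F (G.prod G) := by
    refine hprod.mono hFm (Filter.Eventually.of_forall fun p => ?_)
    simp only [hF]
    split_ifs with h
    · exact le_rfl
    · simp only [norm_zero, norm_mul]
      positivity
  have key : ∀ t : ℝ, ∫ y, (if t ≤ y then y else 0) ∂G
      = (Real.sqrt (2 * π))⁻¹ * rexp (-(1/2) * t ^ 2) := by
    intro t
    rw [hG, gauss_int]
    have : (fun y => gaussianPDFReal 0 1 y * (if t ≤ y then y else 0))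
        = Set.indicator (Set.Ici t)
          (fun y => (Real.sqrt (2 * π))⁻¹ * (y * rexp (-(1/2) * y ^ 2))) := by
      ext y
      by_cases h : t ≤ y <;> simp [Set.indicator, h, g_eq] <;> ring
    rw [this, integral_indicator measurableSet_Ici, integral_Ici_eq_integral_Ioi,
      MeasureTheory.integral_const_mul, aux_ioi (by norm_num : (0:ℝ) < 1/2)]
    rw [div_eq_mul_inv]
    norm_num
  set H : ℝ → ℝ := fun x => if 0 ≤ x then
      x * ((Real.sqrt (2 * π))⁻¹ * rexp (-(1/(2 * σ ^ 2)) * (γ ^ 2 * x ^ 2))) else 0 with hH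
  have inner : ∀ x : ℝ, (∫ y, F (x, y) ∂G) = H x := by
    intro x
    by_cases hx : 0 ≤ x
    · have hpt : (fun y => F (x, y)) = fun y => x * (if -(γ * x) / σ ≤ y then y else 0) := by
        ext y
        simp only [hF]
        by_cases hy : -(γ * x) / σ ≤ y
        · rw [if_pos hy, if_pos ⟨hx, by nlinarith [(div_le_iff₀ hσ0).mp hy]⟩]
        · rw [if_neg hy, mul_zero, if_neg]
          rintro ⟨-, h2⟩
          exact hy (by rw [div_le_iff₀ hσ0]; nlinarith)
      rw [hpt, MeasureTheory.integral_const_mul, key]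
      simp only [hH, if_pos hx]
      congr 2
      field_simp
    · have hpt : (fun y => F (x, y)) = fun _ => 0 := by
        ext y
        simp only [hF]
        rw [if_neg]
        rintro ⟨h1, -⟩
        exact hx h1
      rw [hpt, integral_const, smul_zero]
      simp only [hH, if_neg hx]
  have step : (∫ p : ℝ × ℝ, F p ∂(G.prod G)) = ∫ x, H x ∂G := by
    rw [MeasureTheory.integral_prod _ hFint]
    exact integral_congr_ae (Filter.Eventually.of_forall fun x => inner x)
  have houter : (∫ x, H x ∂G) = (1 - γ ^ 2) / (2 * π) := by
    rw [hG, gauss_int]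
    have hb : (0:ℝ) < 1 / (2 * σ ^ 2) := by positivity
    have hpt : (fun x => gaussianPDFReal 0 1 x * H x)
        = Set.indicator (Set.Ici 0)
          (fun x => (2 * π)⁻¹ * (x * rexp (-(1/(2 * σ ^ 2)) * x ^ 2))) := by
      ext x
      by_cases h : (0:ℝ) ≤ x
      · simp only [Set.indicator, mem_Ici, h, if_true, hH, g_eq]
        have h2π : Real.sqrt (2 * π) * Real.sqrt (2 * π) = 2 * π :=
          Real.mul_self_sqrt (by positivity)
        have hexp : rexp (-(1/2) * x ^ 2) * rexp (-(1/(2 * σ ^ 2)) * (γ ^ 2 * x ^ 2))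
            = rexp (-(1/(2 * σ ^ 2)) * x ^ 2) := by
          rw [← Real.exp_add]
          congr 1
          rw [hσ2]
          field_simp
          ring
        calc (Real.sqrt (2 * π))⁻¹ * rexp (-(1/2) * x ^ 2)
              * (x * ((Real.sqrt (2 * π))⁻¹ * rexp (-(1/(2 * σ ^ 2)) * (γ ^ 2 * x ^ 2))))
            = ((Real.sqrt (2 * π))⁻¹ * (Real.sqrt (2 * π))⁻¹)
              * (x * (rexp (-(1/2) * x ^ 2) * rexp (-(1/(2 * σ ^ 2)) * (γ ^ 2 * x ^ 2)))) := by
              ring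
          _ = (2 * π)⁻¹ * (x * rexp (-(1/(2 * σ ^ 2)) * x ^ 2)) := by
              rw [hexp, ← mul_inv, h2π]
      · simp [Set.indicator, h, hH]
    rw [hpt, integral_indicator measurableSet_Ici, integral_Ici_eq_integral_Ioi,
      MeasureTheory.integral_const_mul, aux_ioi hb]
    have : rexp (-(1 / (2 * σ ^ 2)) * 0 ^ 2) = 1 := by norm_num
    rw [this, hσ2]
    field_simp
  calc ∫ x : ℝ × ℝ,
        (if 0 ≤ x.1 ∧ 0 ≤ γ * x.1 + Real.sqrt (1 - γ ^ 2) * x.2 then x.1 * x.2 else 0)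
      ∂((gaussianReal 0 1).prod (gaussianReal 0 1)) = ∫ p : ℝ × ℝ, F p ∂(G.prod G) := rfl
    _ = ∫ x, H x ∂G := step
    _ = (1 - γ ^ 2) / (2 * π) := houter
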